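/- Let n ≥ 1, let d ≥ 1, and let v : (Fin n → ℝ) → ℝ be d-SOS and nonnegative on nonnegative vectors. Fix i ∈ Fin n and a nonnegative vector s : Fin n → ℝ. Then (1/2^{n−1}) · Σ_{A ⊆ Fin n \ {i}} v( s|_{A ∪ {i}} ) ≥ v(s)/(d+1), where the sum ranges over all subsets A of Fin n \ {i}. (Equivalently: if A is a uniformly random subset of Fin n \ {i} and B its complement in Fin n \ {i}, then E_A[ v(s_A, 0_B, s_i) ] ≥ v(s)/(d+1).) -/
import Mathlib

/-- `v` is a `d`-approximate submodular-over-signals (`d`-SOS) valuation. -/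
def dSOS {n : ℕ} (d : ℝ) (v : (Fin n → ℝ) → ℝ) : Prop :=
  ∀ (j : Fin n) (x δ : ℝ), 0 ≤ x → 0 ≤ δ →
    ∀ t t' : Fin n → ℝ, (∀ l, 0 ≤ t' l) → (∀ l, t' l ≤ t l) →
      d * (v (Function.update t' j (x + δ)) - v (Function.update t' j x)) ≥
        v (Function.update t j (x + δ)) - v (Function.update t j x)

private lemma key_aux {n : ℕ} (d : ℝ) (hd : 1 ≤ d)
    (v : (Fin n → ℝ) → ℝ) (hv : dSOS d v)
    (i : Fin n) (s : Fin n → ℝ) (hs : ∀ l, 0 ≤ s l)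
    (A : Finset (Fin n)) :
    ∀ D : Finset (Fin n), Disjoint D (insert i A) →
      v (fun j => if j ∈ insert i A ∪ D then s j else 0)
        - v (fun j => if j ∈ insert i A then s j else 0)
      ≤ d * (v (fun j => if j ∈ insert i D then s j else 0)
        - v (fun j => if j ∈ ({i} : Finset (Fin n)) then s j else 0)) := by
  intro D
  induction D using Finset.induction_on with
  | empty =>
    intro _
    simp
  | @insert j D hj ih =>
    intro hdisj
    have hdisj' : Disjoint D (insert i A) :=
      (Finset.disjoint_insert_left.mp hdisj).2
    have hjA : j ∉ insert i A := (Finset.disjoint_insert_left.mp hdisj).1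
    have hji : j ≠ i := fun h => hjA (h ▸ Finset.mem_insert_self i A)
    set t : Fin n → ℝ := fun l => if l ∈ insert i A ∪ D then s l else 0 with ht
    set t' : Fin n → ℝ := fun l => if l ∈ insert i D then s l else 0 with ht'
    have e1 : (fun l => if l ∈ insert i A ∪ insert j D then s l else 0)
        = Function.update t j (0 + s j) := by
      funext l
      by_cases h : l = j
      · simp [h, Function.update, ht]
      · simp [Function.update, h, ht, Finset.mem_union, Finset.mem_insert,
          or_comm, or_left_comm]
    have e2 : t = Function.update t j 0 := by
      funext l
      by_cases h : l = j
      · have hnot : j ∉ insert i A ∪ D := by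
          simp only [Finset.mem_union]
          tauto
        simp only [Finset.mem_union, Finset.mem_insert] at hnot
        simp [h, Function.update, ht]
        tauto
      · simp [Function.update, h]
    have e3 : (fun l => if l ∈ insert i (insert j D) then s l else 0)
        = Function.update t' j (0 + s j) := by
      funext l
      by_cases h : l = j
      · simp [h, Function.update, ht']
      · simp [Function.update, h, ht', Finset.mem_insert]
    have e4 : t' = Function.update t' j 0 := by
      funext l
      by_cases h : l = j
      · have hnot : j ∉ insert i D := by
          simp only [Finset.mem_insert]
          tauto
        simp only [Finset.mem_insert] at hnot
        simp [h, Function.update, ht']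
        tauto
      · simp [Function.update, h]
    have ht'nn : ∀ l, 0 ≤ t' l := by
      intro l; simp only [ht']; split <;> [exact hs l; exact le_rfl]
    have ht't : ∀ l, t' l ≤ t l := by
      intro l
      simp only [ht', ht, Finset.mem_union, Finset.mem_insert]
      by_cases h : l = i ∨ l ∈ D
      · have : (l = i ∨ l ∈ A) ∨ l ∈ D := by tauto
        simp [h, this]
      · simp [h]
        split <;> [exact hs l; exact le_rfl]
    have key := hv j 0 (s j) le_rfl (hs j) t t' ht'nn ht't
    rw [← e1, ← e3] at key
    rw [← e2] at key
    rw [← e4] at key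
    have ihD := ih hdisj'
    -- goal: v (r (insert i A ∪ insert j D)) - v (r (insert i A)) ≤ d * (v (r (insert i (insert j D))) - v (r {i}))
    have : (fun l => if l ∈ insert i A ∪ D then s l else 0) = t := rfl
    have : (fun l => if l ∈ insert i D then s l else 0) = t' := rfl
    calc v (fun l => if l ∈ insert i A ∪ insert j D then s l else 0)
          - v (fun l => if l ∈ insert i A then s l else 0)
        = (v (fun l => if l ∈ insert i A ∪ insert j D then s l else 0) - v t)
          + (v t - v (fun l => if l ∈ insert i A then s l else 0)) := by ring
      _ ≤ d * (v (fun l => if l ∈ insert i (insert j D) then s l else 0) - v t')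
          + d * (v t' - v (fun l => if l ∈ ({i} : Finset (Fin n)) then s l else 0)) := by
          exact add_le_add key ihD
      _ = d * (v (fun l => if l ∈ insert i (insert j D) then s l else 0)
          - v (fun l => if l ∈ ({i} : Finset (Fin n)) then s l else 0)) := by ring

/-- Key Lemma (Lemma 3.1): for a nonnegative `d`-SOS valuation `v`, an agent `i`
and a nonnegative signal vector `s`, averaging the value of `s` restricted to
`A ∪ {i}` (zeroing the other coordinates) over all subsets `A` of `[n] \ {i}`
yields at least a `1/(d+1)` fraction of `v s`. -/
theorem key_lemma {n : ℕ} (hn : 1 ≤ n) (d : ℝ) (hd : 1 ≤ d)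
    (v : (Fin n → ℝ) → ℝ) (hv : dSOS d v)
    (hpos : ∀ t : Fin n → ℝ, (∀ l, 0 ≤ t l) → 0 ≤ v t)
    (i : Fin n) (s : Fin n → ℝ) (hs : ∀ l, 0 ≤ s l) :
    (1 / 2 ^ (n - 1) : ℝ) *
        ∑ A ∈ (({i} : Finset (Fin n))ᶜ).powerset,
          v (fun j => if j ∈ insert i A then s j else 0)
      ≥ v s / (d + 1) := by
  have hd0 : (0:ℝ) ≤ d := le_trans zero_le_one hd
  -- pointwise bound for each A
  have hA : ∀ A ∈ (({i} : Finset (Fin n))ᶜ).powerset,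
      v s ≤ v (fun j => if j ∈ insert i A then s j else 0)
        + d * v (fun j => if j ∈ insert i (({i} : Finset (Fin n))ᶜ \ A) then s j else 0) := by
    intro A hA
    rw [Finset.mem_powerset] at hA
    set D := (({i} : Finset (Fin n))ᶜ \ A) with hD
    have hdisj : Disjoint D (insert i A) := by
      rw [Finset.disjoint_insert_right]
      constructor
      · simp [hD]
      · exact Finset.sdiff_disjoint
    have hunion : insert i A ∪ D = Finset.univ := by
      ext l
      simp only [Finset.mem_union, Finset.mem_insert, hD, Finset.mem_sdiff,
        Finset.mem_compl, Finset.mem_singleton, Finset.mem_univ, iff_true]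
      by_cases h : l = i
      · tauto
      · tauto
    have huniv : (fun j => if j ∈ insert i A ∪ D then s j else 0) = s := by
      funext l; simp [hunion]
    have h1 := key_aux d hd v hv i s hs A D hdisj
    rw [huniv] at h1
    have h2 : 0 ≤ v (fun j => if j ∈ ({i} : Finset (Fin n)) then s j else 0) := by
      apply hpos
      intro l; split <;> [exact hs l; exact le_rfl]
    nlinarith
  -- sum over A
  set P := (({i} : Finset (Fin n))ᶜ).powerset with hP
  set S := ∑ A ∈ P, v (fun j => if j ∈ insert i A then s j else 0) with hS
  have hswap : ∑ A ∈ P, v (fun j => if j ∈ insert i (({i} : Finset (Fin n))ᶜ \ A) then s j else 0) = S := by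
    rw [hS]
    apply Finset.sum_nbij' (i := fun A => (({i} : Finset (Fin n))ᶜ \ A))
      (j := fun A => (({i} : Finset (Fin n))ᶜ \ A))
    · intro a ha; rw [hP, Finset.mem_powerset]; exact Finset.sdiff_subset
    · intro a ha; rw [hP, Finset.mem_powerset]; exact Finset.sdiff_subset
    · intro a ha
      rw [hP, Finset.mem_powerset] at ha
      exact Finset.sdiff_sdiff_eq_self ha
    · intro a ha
      rw [hP, Finset.mem_powerset] at ha
      exact Finset.sdiff_sdiff_eq_self ha
    · intro a ha; rfl
  have hcard : (P.card : ℝ) = 2 ^ (n - 1) := by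
    rw [hP, Finset.card_powerset, Finset.card_compl, Finset.card_singleton,
      Fintype.card_fin]
    push_cast
    ring
  have hsum : (2 ^ (n - 1) : ℝ) * v s ≤ S + d * S := by
    calc (2 ^ (n - 1) : ℝ) * v s = ∑ _A ∈ P, v s := by
          rw [Finset.sum_const, nsmul_eq_mul, hcard]
      _ ≤ ∑ A ∈ P, (v (fun j => if j ∈ insert i A then s j else 0)
          + d * v (fun j => if j ∈ insert i (({i} : Finset (Fin n))ᶜ \ A) then s j else 0)) :=
          Finset.sum_le_sum hA
      _ = S + d * S := by
          rw [Finset.sum_add_distrib, ← Finset.mul_sum, hswap]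
  have hpow : (0:ℝ) < 2 ^ (n - 1) := by positivity
  rw [ge_iff_le, one_div, inv_mul_eq_div, div_le_div_iff₀ (by linarith) hpow]
  nlinarith
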